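/- The curvature tensor of the oscillator algebra 𝔤ₙ(λ) is given in invariant form by R(X,Y)Z = (1/2) g(φX, Y) φZ + (1/4)(g(φX, Z) φY − g(φY, Z) φX) + (1/4)(η(Y) X − η(X) Y) η(Z) + (1/4)(η(X) g(Y,Z) − η(Y) g(X,Z)) ξ + (1/4)(η(X) θ(Y) − η(Y) θ(X))(η(Z) ζ − θ(Z) ξ), for all X, Y, Z ∈ 𝔤ₙ(λ). -/

import Mathlib

open scoped RealInnerProductSpace
open Finset

noncomputable section

/-- The underlying inner product space of the oscillator algebra `𝔤ₙ(λ)`: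
a `(2n+2)`-dimensional real inner product space. -/
abbrev Osc (n : ℕ) := EuclideanSpace ℝ (Fin (2*n+2))

/-- The basis vectors `e₁, …, eₙ`. -/
def oe (n : ℕ) (i : Fin n) : Osc n :=
  EuclideanSpace.single ⟨i.1, by have := i.2; omega⟩ 1

/-- The basis vectors `e_{n+1}, …, e_{2n}`. -/
def oE (n : ℕ) (i : Fin n) : Osc n :=
  EuclideanSpace.single ⟨n + i.1, by have := i.2; omega⟩ 1

/-- The basis vector `ξ`. -/
def oXi (n : ℕ) : Osc n := EuclideanSpace.single ⟨2*n, by omega⟩ 1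

/-- The basis vector `ζ`. -/
def oZeta (n : ℕ) : Osc n := EuclideanSpace.single ⟨2*n+1, by omega⟩ 1

/-- `br` is the Lie bracket of the oscillator algebra `𝔤ₙ(λ)`: the bilinear map
determined by `[eᵢ, e_{n+j}] = δᵢⱼ ξ`, `[ζ, eⱼ] = λⱼ e_{n+j}`, `[ζ, e_{n+j}] = −λⱼ eⱼ`,
all other brackets of basis vectors being zero. -/
structure IsOscBracket (n : ℕ) (lam : Fin n → ℝ)
    (br : Osc n →ₗ[ℝ] Osc n →ₗ[ℝ] Osc n) : Prop where
  anti : ∀ X Y : Osc n, br X Y = - br Y X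
  ee : ∀ i j : Fin n, br (oe n i) (oe n j) = 0
  eE : ∀ i j : Fin n, br (oe n i) (oE n j) = if i = j then oXi n else 0
  EE : ∀ i j : Fin n, br (oE n i) (oE n j) = 0
  exi : ∀ i : Fin n, br (oe n i) (oXi n) = 0
  Exi : ∀ i : Fin n, br (oE n i) (oXi n) = 0
  zee : ∀ j : Fin n, br (oZeta n) (oe n j) = lam j • oE n j
  zeE : ∀ j : Fin n, br (oZeta n) (oE n j) = - (lam j • oe n j)
  xize : br (oXi n) (oZeta n) = 0

/-- `nab` is the Levi-Civita connection of the left-invariant metric (evaluated on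
left-invariant fields): the bilinear map determined by the Koszul formula
`2 g(∇_X Y, Z) = g([X,Y], Z) − g([Y,Z], X) + g([Z,X], Y)`. -/
def IsLeviCivita (n : ℕ) (br nab : Osc n →ₗ[ℝ] Osc n →ₗ[ℝ] Osc n) : Prop :=
  ∀ X Y Z : Osc n,
    2 * ⟪nab X Y, Z⟫ = ⟪br X Y, Z⟫ - ⟪br Y Z, X⟫ + ⟪br Z X, Y⟫

/-- The Nomizu operator `A_V X = −∇_X V`. -/
def nomizu {n : ℕ} (nab : Osc n →ₗ[ℝ] Osc n →ₗ[ℝ] Osc n) (V X : Osc n) : Osc n :=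
  -(nab X V)

/-- The covariant derivative of the Nomizu operator:
`(∇_X A_V) Y = ∇_X (A_V Y) − A_V (∇_X Y)`. -/
def covNomizu {n : ℕ} (nab : Osc n →ₗ[ℝ] Osc n →ₗ[ℝ] Osc n) (V X Y : Osc n) : Osc n :=
  nab X (nomizu nab V Y) - nomizu nab V (nab X Y)

/-- The curvature tensor `R(X,Y)Z = ∇_X ∇_Y Z − ∇_Y ∇_X Z − ∇_{[X,Y]} Z`. -/
def curvR {n : ℕ} (br nab : Osc n →ₗ[ℝ] Osc n →ₗ[ℝ] Osc n) (X Y Z : Osc n) : Osc n :=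
  nab X (nab Y Z) - nab Y (nab X Z) - nab (br X Y) Z

/-- A unit vector `V ∈ 𝔤ₙ(λ)` is a *minimal* unit vector field if there is an orthonormal
basis `u₁, …, u_{2n+2}` of eigenvectors of `A_Vᵀ A_V` (the eigenvector condition being
expressed as `g(A_V W, A_V uᵢ) = σᵢ² g(W, uᵢ)` for all `W`) with eigenvalues `σᵢ²` such that
`Σᵢ ((∇_{uᵢ} A_V)uᵢ + A_V R(V, A_V uᵢ)uᵢ)/(1 + σᵢ²) = (Σᵢ σᵢ²/(1 + σᵢ²)) V`. -/
def IsMinimal {n : ℕ} (br nab : Osc n →ₗ[ℝ] Osc n →ₗ[ℝ] Osc n) (V : Osc n) : Prop :=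
  ∃ (u : Fin (2*n+2) → Osc n) (σ : Fin (2*n+2) → ℝ),
    (∀ i j, ⟪u i, u j⟫ = if i = j then 1 else 0) ∧
    (∀ i, ∀ W : Osc n,
      ⟪nomizu nab V W, nomizu nab V (u i)⟫ = (σ i)^2 * ⟪W, u i⟫) ∧
    (∑ i, (1 + (σ i)^2)⁻¹ •
        (covNomizu nab V (u i) (u i) +
          nomizu nab V (curvR br nab V (nomizu nab V (u i)) (u i))))
      = (∑ i, (σ i)^2 / (1 + (σ i)^2)) • V

/-- The operator `φ` with `φ eᵢ = e_{n+i}`, `φ e_{n+i} = −eᵢ`, `φ ξ = φ ζ = 0`. -/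
structure IsPhi (n : ℕ) (phi : Osc n →ₗ[ℝ] Osc n) : Prop where
  he : ∀ i : Fin n, phi (oe n i) = oE n i
  hE : ∀ i : Fin n, phi (oE n i) = - oe n i
  hxi : phi (oXi n) = 0
  hzeta : phi (oZeta n) = 0

/-- The operator `E_λ` with `E_λ eᵢ = λᵢ eᵢ`, `E_λ e_{n+i} = λᵢ e_{n+i}`, `E_λ ξ = E_λ ζ = 0`. -/
structure IsElam (n : ℕ) (lam : Fin n → ℝ) (El : Osc n →ₗ[ℝ] Osc n) : Prop where
  he : ∀ i : Fin n, El (oe n i) = lam i • oe n i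
  hE : ∀ i : Fin n, El (oE n i) = lam i • oE n i
  hxi : El (oXi n) = 0
  hzeta : El (oZeta n) = 0
namespace OscAux

variable {n : ℕ}

lemma inner_ss (p q : Fin (2*n+2)) :
    ⟪(EuclideanSpace.single p 1 : Osc n), EuclideanSpace.single q 1⟫ =
      if p = q then (1:ℝ) else 0 := by
  rw [EuclideanSpace.inner_single_left]
  simp [EuclideanSpace.single_apply, eq_comm]

lemma osc_cases (P : Osc n → Prop)
    (he : ∀ i, P (oe n i)) (hE : ∀ i, P (oE n i)) (hxi : P (oXi n)) (hz : P (oZeta n)) :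
    ∀ k : Fin (2*n+2), P (EuclideanSpace.single k 1) := by
  rintro ⟨k, hk⟩
  by_cases h1 : k < n
  · exact he ⟨k, h1⟩
  · by_cases h2 : k < 2*n
    · have h : (⟨k, hk⟩ : Fin (2*n+2)) = ⟨n + (k - n), by omega⟩ := by
        simp only [Fin.mk.injEq]; omega
      rw [h]; exact hE ⟨k - n, by omega⟩
    · by_cases h3 : k = 2*n
      · have h : (⟨k, hk⟩ : Fin (2*n+2)) = ⟨2*n, by omega⟩ := by
          simp only [Fin.mk.injEq]; omega
        rw [h]; exact hxi
      · have h : (⟨k, hk⟩ : Fin (2*n+2)) = ⟨2*n+1, by omega⟩ := by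
          simp only [Fin.mk.injEq]; omega
        rw [h]; exact hz

lemma osc_lext {M : Type*} [AddCommGroup M] [Module ℝ M] {f g : Osc n →ₗ[ℝ] M}
    (he : ∀ i, f (oe n i) = g (oe n i)) (hE : ∀ i, f (oE n i) = g (oE n i))
    (hxi : f (oXi n) = g (oXi n)) (hz : f (oZeta n) = g (oZeta n)) : f = g := by
  apply Module.Basis.ext (PiLp.basisFun 2 ℝ (Fin (2*n+2)))
  intro k
  have hb : (PiLp.basisFun 2 ℝ (Fin (2*n+2))) k = (EuclideanSpace.single k 1 : Osc n) := by
    rw [PiLp.basisFun_apply]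
  rw [hb]
  exact osc_cases (fun v => f v = g v) he hE hxi hz k


lemma i_ee (i j : Fin n) : ⟪oe n i, oe n j⟫ = if i = j then (1:ℝ) else 0 := by
  rw [oe, oe, inner_ss]
  simp [Fin.ext_iff]

lemma i_eE (i j : Fin n) : ⟪oe n i, oE n j⟫ = (0:ℝ) := by
  rw [oe, oE, inner_ss, if_neg]
  have := i.2; have := j.2
  simp only [Fin.mk.injEq]; omega

lemma i_exi (i : Fin n) : ⟪oe n i, oXi n⟫ = (0:ℝ) := by
  rw [oe, oXi, inner_ss, if_neg]
  have := i.2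
  simp only [Fin.mk.injEq]; omega

lemma i_ez (i : Fin n) : ⟪oe n i, oZeta n⟫ = (0:ℝ) := by
  rw [oe, oZeta, inner_ss, if_neg]
  have := i.2
  simp only [Fin.mk.injEq]; omega

lemma i_Ee (i j : Fin n) : ⟪oE n i, oe n j⟫ = (0:ℝ) := by
  rw [real_inner_comm]; exact i_eE j i

lemma i_EE (i j : Fin n) : ⟪oE n i, oE n j⟫ = if i = j then (1:ℝ) else 0 := by
  rw [oE, oE, inner_ss]
  simp [Fin.ext_iff]

lemma i_Exi (i : Fin n) : ⟪oE n i, oXi n⟫ = (0:ℝ) := by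
  rw [oE, oXi, inner_ss, if_neg]
  have := i.2
  simp only [Fin.mk.injEq]; omega

lemma i_Ez (i : Fin n) : ⟪oE n i, oZeta n⟫ = (0:ℝ) := by
  rw [oE, oZeta, inner_ss, if_neg]
  have := i.2
  simp only [Fin.mk.injEq]; omega

lemma i_xie (i : Fin n) : ⟪oXi n, oe n i⟫ = (0:ℝ) := by
  rw [real_inner_comm]; exact i_exi i

lemma i_xiE (i : Fin n) : ⟪oXi n, oE n i⟫ = (0:ℝ) := by
  rw [real_inner_comm]; exact i_Exi i

lemma i_xixi : ⟪oXi n, oXi n⟫ = (1:ℝ) := by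
  rw [oXi, inner_ss, if_pos rfl]

lemma i_xiz : ⟪oXi n, oZeta n⟫ = (0:ℝ) := by
  rw [oXi, oZeta, inner_ss, if_neg]
  simp only [Fin.mk.injEq]; omega

lemma i_ze (i : Fin n) : ⟪oZeta n, oe n i⟫ = (0:ℝ) := by
  rw [real_inner_comm]; exact i_ez i

lemma i_zE (i : Fin n) : ⟪oZeta n, oE n i⟫ = (0:ℝ) := by
  rw [real_inner_comm]; exact i_Ez i

lemma i_zxi : ⟪oZeta n, oXi n⟫ = (0:ℝ) := by
  rw [real_inner_comm]; exact i_xiz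

lemma i_zz : ⟪oZeta n, oZeta n⟫ = (1:ℝ) := by
  rw [oZeta, inner_ss, if_pos rfl]


variable {phi B : Osc n →ₗ[ℝ] Osc n} {lam : Fin n → ℝ} {br : Osc n →ₗ[ℝ] Osc n →ₗ[ℝ] Osc n}

lemma phi_skew (hphi : IsPhi n phi) (V W : Osc n) : ⟪phi V, W⟫ = -⟪V, phi W⟫ := by
  have h : (innerₗ (Osc n)).comp phi = -((innerₗ (Osc n)).compl₂ phi) := by
    apply osc_lext <;> try intro i
    all_goals apply osc_lext <;> try intro j
    all_goals
      simp only [LinearMap.comp_apply, LinearMap.neg_apply, LinearMap.compl₂_apply,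
        innerₗ_apply_apply, map_zero, map_neg, map_smul, LinearMap.zero_apply,
        hphi.he, hphi.hE, hphi.hxi, hphi.hzeta, i_ee, i_eE, i_exi, i_ez, i_Ee, i_EE,
        i_Exi, i_Ez, i_xie, i_xiE, i_xixi, i_xiz, i_ze, i_zE, i_zxi, i_zz,
        inner_neg_left, inner_neg_right, inner_zero_left, inner_zero_right,
        neg_neg, neg_zero]
  have h2 := LinearMap.congr_fun (LinearMap.congr_fun h V) W
  simp only [LinearMap.comp_apply, LinearMap.neg_apply, LinearMap.compl₂_apply,
    innerₗ_apply_apply] at h2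
  exact h2

lemma phi_phi (hphi : IsPhi n phi) (W : Osc n) :
    phi (phi W) = -W + ⟪W, oXi n⟫ • oXi n + ⟪W, oZeta n⟫ • oZeta n := by
  have h : phi ∘ₗ phi = -LinearMap.id
      + ((innerₗ (Osc n)).flip (oXi n)).smulRight (oXi n)
      + ((innerₗ (Osc n)).flip (oZeta n)).smulRight (oZeta n) := by
    apply osc_lext <;> try intro i
    all_goals
      simp only [LinearMap.comp_apply, LinearMap.neg_apply, LinearMap.add_apply,
        LinearMap.id_apply, LinearMap.smulRight_apply, LinearMap.flip_apply,
        innerₗ_apply_apply, map_zero, map_neg, map_smul,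
        hphi.he, hphi.hE, hphi.hxi, hphi.hzeta, i_ee, i_eE, i_exi, i_ez, i_Ee, i_EE,
        i_Exi, i_Ez, i_xie, i_xiE, i_xixi, i_xiz, i_ze, i_zE, i_zxi, i_zz,
        zero_smul, one_smul, add_zero, zero_add, neg_neg, neg_zero]
    all_goals first | rfl | module
  have h2 := LinearMap.congr_fun h W
  simp only [LinearMap.comp_apply, LinearMap.neg_apply, LinearMap.add_apply,
    LinearMap.id_apply, LinearMap.smulRight_apply, LinearMap.flip_apply,
    innerₗ_apply_apply] at h2
  exact h2

variable (hBe : ∀ j, B (oe n j) = lam j • oE n j)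
  (hBE : ∀ j, B (oE n j) = -(lam j • oe n j))
  (hBxi : B (oXi n) = 0) (hBz : B (oZeta n) = 0)

include hBe hBE hBxi hBz in
lemma B_skew (V W : Osc n) : ⟪B V, W⟫ = -⟪V, B W⟫ := by
  have h : (innerₗ (Osc n)).comp B = -((innerₗ (Osc n)).compl₂ B) := by
    apply osc_lext <;> try intro i
    all_goals apply osc_lext <;> try intro j
    all_goals
      simp only [LinearMap.comp_apply, LinearMap.neg_apply, LinearMap.compl₂_apply,
        innerₗ_apply_apply, map_zero, map_neg, map_smul, LinearMap.zero_apply,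
        hBe, hBE, hBxi, hBz, i_ee, i_eE, i_exi, i_ez, i_Ee, i_EE,
        i_Exi, i_Ez, i_xie, i_xiE, i_xixi, i_xiz, i_ze, i_zE, i_zxi, i_zz,
        LinearMap.smul_apply, smul_eq_mul,
        inner_neg_left, inner_neg_right, inner_zero_left, inner_zero_right,
        real_inner_smul_left, real_inner_smul_right,
        neg_neg, neg_zero, mul_zero, zero_mul, mul_ite, mul_one]
    all_goals try rfl
    all_goals (split_ifs with hij <;> first | rfl | rw [hij])
  have h2 := LinearMap.congr_fun (LinearMap.congr_fun h V) W
  simp only [LinearMap.comp_apply, LinearMap.neg_apply, LinearMap.compl₂_apply,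
    innerₗ_apply_apply] at h2
  exact h2

include hBe hBE hBxi hBz in
lemma B_phi (hphi : IsPhi n phi) (W : Osc n) : B (phi W) = phi (B W) := by
  have h : B ∘ₗ phi = phi ∘ₗ B := by
    apply osc_lext <;> try intro i
    all_goals
      simp only [LinearMap.comp_apply, map_zero, map_neg, map_smul,
        hphi.he, hphi.hE, hphi.hxi, hphi.hzeta, hBe, hBE, hBxi, hBz,
        smul_neg, neg_neg, neg_zero]
  exact LinearMap.congr_fun h W

set_option maxHeartbeats 2000000 in
lemma brkt (hbr : IsOscBracket n lam br) (hphi : IsPhi n phi) (V W : Osc n) :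
    br V W = ⟪phi V, W⟫ • oXi n + ⟪V, oZeta n⟫ • br (oZeta n) W
      - ⟪W, oZeta n⟫ • br (oZeta n) V := by
  have hXX : ∀ X : Osc n, br X X = 0 := by
    intro X
    have h := hbr.anti X X
    have h2 : br X X + br X X = 0 := by nth_rewrite 2 [h]; simp
    have h3 : (2:ℝ) • br X X = 0 := by rw [two_smul]; exact h2
    simpa using h3
  -- derived bracket values
  have hEe : ∀ i j : Fin n, br (oE n i) (oe n j) = -(if i = j then oXi n else 0) := by
    intro i j; rw [hbr.anti, hbr.eE]
    by_cases h : i = j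
    · simp [h]
    · simp [h, Ne.symm h]
  have hez : ∀ i : Fin n, br (oe n i) (oZeta n) = -(lam i • oE n i) := by
    intro i; rw [hbr.anti, hbr.zee]
  have hEz : ∀ i : Fin n, br (oE n i) (oZeta n) = lam i • oe n i := by
    intro i; rw [hbr.anti, hbr.zeE]; simp
  have hxie : ∀ i : Fin n, br (oXi n) (oe n i) = 0 := by
    intro i; rw [hbr.anti, hbr.exi]; simp
  have hxiE : ∀ i : Fin n, br (oXi n) (oE n i) = 0 := by
    intro i; rw [hbr.anti, hbr.Exi]; simp
  have hzxi : br (oZeta n) (oXi n) = 0 := by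
    rw [hbr.anti, hbr.xize]; simp
  have h : br = ((innerₗ (Osc n)).comp phi).compr₂ (LinearMap.toSpanSingleton ℝ (Osc n) (oXi n))
      + ((innerₗ (Osc n)).flip (oZeta n)).smulRight (br (oZeta n))
      - (((innerₗ (Osc n)).flip (oZeta n)).smulRight (br (oZeta n))).flip := by
    apply osc_lext <;> try intro i
    all_goals apply osc_lext <;> try intro j
    all_goals
      simp only [LinearMap.add_apply, LinearMap.sub_apply, LinearMap.compr₂_apply,
        LinearMap.comp_apply, LinearMap.flip_apply, LinearMap.smulRight_apply,
        LinearMap.smul_apply, LinearMap.toSpanSingleton_apply, innerₗ_apply_apply,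
        LinearMap.neg_apply, neg_smul,
        map_zero, map_neg, map_smul, LinearMap.zero_apply,
        hphi.he, hphi.hE, hphi.hxi, hphi.hzeta,
        hbr.ee, hbr.eE, hbr.EE, hbr.exi, hbr.Exi, hbr.zee, hbr.zeE, hbr.xize,
        hXX, hEe, hez, hEz, hxie, hxiE, hzxi,
        i_ee, i_eE, i_exi, i_ez, i_Ee, i_EE,
        i_Exi, i_Ez, i_xie, i_xiE, i_xixi, i_xiz, i_ze, i_zE, i_zxi, i_zz,
        LinearMap.smul_apply, smul_eq_mul,
        inner_neg_left, inner_neg_right, inner_zero_left, inner_zero_right,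
        real_inner_smul_left, real_inner_smul_right,
        neg_neg, neg_zero, mul_zero, zero_mul, mul_ite, mul_one,
        zero_smul, one_smul, smul_zero, add_zero, zero_add, sub_zero, zero_sub, ite_smul]
    all_goals try rfl
    all_goals try (split_ifs with hij <;> first | rfl | rw [hij])
    all_goals try module
  have h2 := LinearMap.congr_fun (LinearMap.congr_fun h V) W
  simp only [LinearMap.add_apply, LinearMap.sub_apply, LinearMap.compr₂_apply,
    LinearMap.comp_apply, LinearMap.flip_apply, LinearMap.smulRight_apply,
    LinearMap.smul_apply, LinearMap.toSpanSingleton_apply, innerₗ_apply_apply] at h2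
  exact h2

end OscAux

set_option maxHeartbeats 2000000 in
/-- Lemma 3: invariant form of the Riemannian curvature tensor of the oscillator group. -/
theorem curvature_invariant_form (n : ℕ) (hn : 1 ≤ n) (lam : Fin n → ℝ)
    (br nab : Osc n →ₗ[ℝ] Osc n →ₗ[ℝ] Osc n)
    (hbr : IsOscBracket n lam br) (hlc : IsLeviCivita n br nab)
    (phi : Osc n →ₗ[ℝ] Osc n) (hphi : IsPhi n phi) :
    ∀ X Y Z : Osc n,
      curvR br nab X Y Z =
        ((1/2) * ⟪phi X, Y⟫) • phi Z
        + ((1/4) : ℝ) • (⟪phi X, Z⟫ • phi Y - ⟪phi Y, Z⟫ • phi X)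
        + ((1/4) * ⟪Z, oXi n⟫) • (⟪Y, oXi n⟫ • X - ⟪X, oXi n⟫ • Y)
        + ((1/4) * (⟪X, oXi n⟫ * ⟪Y, Z⟫ - ⟪Y, oXi n⟫ * ⟪X, Z⟫)) • oXi n
        + ((1/4) * (⟪X, oXi n⟫ * ⟪Y, oZeta n⟫ - ⟪Y, oXi n⟫ * ⟪X, oZeta n⟫)) •
            (⟪Z, oXi n⟫ • oZeta n - ⟪Z, oZeta n⟫ • oXi n) := by
  intro X Y Z
  obtain ⟨B, hBdef⟩ : ∃ B : Osc n →ₗ[ℝ] Osc n, br (oZeta n) = B := ⟨_, rfl⟩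
  have hBe : ∀ j, B (oe n j) = lam j • oE n j := fun j => hBdef ▸ hbr.zee j
  have hBE : ∀ j, B (oE n j) = -(lam j • oe n j) := fun j => hBdef ▸ hbr.zeE j
  have hBz : B (oZeta n) = 0 := by
    rw [← hBdef]
    have h := hbr.anti (oZeta n) (oZeta n)
    have h2 : (2:ℝ) • (br (oZeta n)) (oZeta n) = 0 := by
      rw [two_smul]; nth_rewrite 2 [h]; simp
    simpa using h2
  have hBxi : B (oXi n) = 0 := by
    rw [← hBdef, hbr.anti, hbr.xize]; simp
  have hsk := OscAux.phi_skew hphi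
  have hpp := OscAux.phi_phi hphi
  have hBsk := OscAux.B_skew hBe hBE hBxi hBz
  have hBp := OscAux.B_phi hBe hBE hBxi hBz hphi
  have hbrf : ∀ V W : Osc n, br V W
      = ⟪phi V, W⟫ • oXi n + ⟪V, oZeta n⟫ • B W - ⟪W, oZeta n⟫ • B V := by
    intro V W; rw [← hBdef]; exact OscAux.brkt hbr hphi V W
  -- scalar toolkit
  have tpxi : ∀ W : Osc n, ⟪phi W, oXi n⟫ = 0 := fun W => by
    rw [hsk, hphi.hxi, inner_zero_right, neg_zero]
  have txip : ∀ W : Osc n, ⟪oXi n, phi W⟫ = 0 := fun W => by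
    rw [real_inner_comm]; exact tpxi W
  have tpz : ∀ W : Osc n, ⟪phi W, oZeta n⟫ = 0 := fun W => by
    rw [hsk, hphi.hzeta, inner_zero_right, neg_zero]
  have tzp : ∀ W : Osc n, ⟪oZeta n, phi W⟫ = 0 := fun W => by
    rw [real_inner_comm]; exact tpz W
  have tBxi : ∀ W : Osc n, ⟪B W, oXi n⟫ = 0 := fun W => by
    rw [hBsk, hBxi, inner_zero_right, neg_zero]
  have txiB : ∀ W : Osc n, ⟪oXi n, B W⟫ = 0 := fun W => by
    rw [real_inner_comm]; exact tBxi W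
  have tBz : ∀ W : Osc n, ⟪B W, oZeta n⟫ = 0 := fun W => by
    rw [hBsk, hBz, inner_zero_right, neg_zero]
  have tzB : ∀ W : Osc n, ⟪oZeta n, B W⟫ = 0 := fun W => by
    rw [real_inner_comm]; exact tBz W
  have tphph : ∀ V W : Osc n, ⟪phi V, phi W⟫
      = ⟪V, W⟫ - ⟪V, oXi n⟫ * ⟪W, oXi n⟫ - ⟪V, oZeta n⟫ * ⟪W, oZeta n⟫ := by
    intro V W
    rw [hsk, hpp]
    simp only [inner_add_right, inner_neg_right, real_inner_smul_right]
    ring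
  have tBph : ∀ V W : Osc n, ⟪B V, phi W⟫ = ⟪phi V, B W⟫ := by
    intro V W; rw [hBsk, hBp, ← hsk]
  have tphBl : ∀ V W : Osc n, ⟪phi (B V), W⟫ = -⟪phi V, B W⟫ := by
    intro V W; rw [hsk, tBph]
  have tphBr : ∀ V W : Osc n, ⟪V, phi (B W)⟫ = -⟪phi V, B W⟫ := by
    intro V W; have := hsk V (B W); linarith
  have tphsym : ∀ V W : Osc n, ⟪phi V, W⟫ = -⟪phi W, V⟫ := by
    intro V W; rw [hsk, real_inner_comm]
  have tBsym : ∀ V W : Osc n, ⟪B V, W⟫ = -⟪B W, V⟫ := by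
    intro V W; rw [hBsk, real_inner_comm]
  -- the Levi-Civita connection in invariant form
  have hnab : ∀ V W : Osc n, nab V W =
      (2⁻¹ * ⟪phi V, W⟫) • oXi n - (2⁻¹ * ⟪V, oXi n⟫) • phi W
        - (2⁻¹ * ⟪W, oXi n⟫) • phi V + ⟪V, oZeta n⟫ • B W := by
    intro V W
    apply ext_inner_right ℝ
    intro U
    have h := hlc V W U
    rw [hbrf V W, hbrf W U, hbrf U V] at h
    apply mul_left_cancel₀ (two_ne_zero (α := ℝ))
    rw [h]
    simp only [inner_add_left, inner_sub_left, real_inner_smul_left]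
    rw [tBsym U V, tBsym U W, tBsym W V, tphsym U V,
      real_inner_comm (oXi n) V, real_inner_comm (oXi n) W]
    ring
  -- expand the curvature tensor
  simp only [curvR, hnab, hbrf]
  simp only [map_add, map_sub, map_smul, map_neg, map_zero,
    inner_add_left, inner_add_right, inner_sub_left, inner_sub_right,
    real_inner_smul_left, real_inner_smul_right, inner_neg_left, inner_neg_right,
    smul_add, smul_sub, smul_neg, smul_smul,
    hphi.hxi, hphi.hzeta, hBxi, hBz,
    tpxi, txip, tpz, tzp, tBxi, txiB, tBz, tzB,
    OscAux.i_xixi, OscAux.i_xiz, OscAux.i_zxi, OscAux.i_zz,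
    tphph, hpp, hBp, tBph, tphBl, tphBr,
    inner_zero_left, inner_zero_right, zero_smul, smul_zero, add_zero, zero_add,
    mul_zero, zero_mul, neg_zero, neg_neg, sub_zero, zero_sub]
  rw [real_inner_comm Y X]
  module
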